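/- Generalized performance difference lemma (trajectory form): for every (possibly nonstationary) stochastic policy π and every time-indexed baseline f = (f_t : S → ℝ)_{0 ≤ t ≤ H} with f_H ≡ 0, and every initial state s₀ ∈ S, the value satisfies V^π_0(s₀) − f_0(s₀) = Σ_{t=0}^{H−1} E_{s ∼ d^{π,s₀}_t}[ A^f_t(s, π) ], where d^{π,s₀}_t is the state distribution at time t under π started from s₀. -/
import Mathlib


open scoped BigOperators

/-- Expectation of a real-valued function under a probability mass function on a finite type. -/
noncomputable def pexp {α : Type*} [Fintype α] (p : PMF α) (f : α → ℝ) : ℝ :=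
  ∑ a, (p a).toReal * f a

lemma pexp_const {α : Type*} [Fintype α] (p : PMF α) (c : ℝ) :
    pexp p (fun _ => c) = c := by
  unfold pexp
  rw [← Finset.sum_mul]
  have : (∑ a, (p a).toReal) = 1 := by
    have h := p.tsum_coe
    rw [tsum_fintype] at h
    have := congrArg ENNReal.toReal h
    rwa [ENNReal.toReal_sum (fun a _ => p.apply_ne_top a)] at this
  rw [this, one_mul]

lemma pexp_add {α : Type*} [Fintype α] (p : PMF α) (g h : α → ℝ) :
    pexp p (fun a => g a + h a) = pexp p g + pexp p h := by
  unfold pexp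
  rw [← Finset.sum_add_distrib]
  exact Finset.sum_congr rfl fun a _ => mul_add _ _ _

lemma pexp_sub {α : Type*} [Fintype α] (p : PMF α) (g h : α → ℝ) :
    pexp p (fun a => g a - h a) = pexp p g - pexp p h := by
  unfold pexp
  rw [← Finset.sum_sub_distrib]
  exact Finset.sum_congr rfl fun a _ => mul_sub _ _ _

lemma pexp_pure {α : Type*} [Fintype α] (s : α) (g : α → ℝ) :
    pexp (PMF.pure s) g = g s := by
  unfold pexp
  rw [Finset.sum_eq_single s]
  · simp [PMF.pure_apply]
  · intro b _ hb
    simp [PMF.pure_apply, hb]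
  · intro hs; exact absurd (Finset.mem_univ s) hs

lemma pexp_bind {α β : Type*} [Fintype α] [Fintype β] (p : PMF α) (q : α → PMF β)
    (g : β → ℝ) : pexp (p.bind q) g = pexp p (fun a => pexp (q a) g) := by
  unfold pexp
  have hb : ∀ b, ((p.bind q) b).toReal = ∑ a, (p a).toReal * (q a b).toReal := by
    intro b
    rw [PMF.bind_apply, tsum_fintype,
      ENNReal.toReal_sum (fun a _ => ENNReal.mul_ne_top (p.apply_ne_top a) ((q a).apply_ne_top b))]
    exact Finset.sum_congr rfl fun a _ => ENNReal.toReal_mul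
  calc ∑ b, ((p.bind q) b).toReal * g b
      = ∑ b, ∑ a, (p a).toReal * ((q a b).toReal * g b) := by
        refine Finset.sum_congr rfl fun b _ => ?_
        rw [hb, Finset.sum_mul]
        exact Finset.sum_congr rfl fun a _ => mul_assoc _ _ _
    _ = ∑ a, (p a).toReal * ∑ b, (q a b).toReal * g b := by
        rw [Finset.sum_comm]
        exact Finset.sum_congr rfl fun a _ => (Finset.mul_sum _ _ _).symm

theorem generalized_performance_difference_trajectory
    {S A : Type*} [Fintype S] [Nonempty S] [Fintype A] [Nonempty A]
    (P : S → A → PMF S) (r : S → A → ℝ)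
    (hr : ∀ s a, 0 ≤ r s a ∧ r s a ≤ 1)
    (H : ℕ)
    (π : ℕ → S → PMF A)
    (V : ℕ → S → ℝ)
    (hVH : ∀ s, V H s = 0)
    (hV : ∀ t, t < H → ∀ s,
      V t s = pexp (π t s) (fun a => r s a + pexp (P s a) (V (t + 1))))
    (f : ℕ → S → ℝ)
    (hfH : ∀ s, f H s = 0)
    (s₀ : S)
    (d : ℕ → PMF S)
    (hd0 : d 0 = PMF.pure s₀)
    (hd : ∀ t, d (t + 1) = (d t).bind fun s => (π t s).bind fun a => P s a) :
    V 0 s₀ - f 0 s₀ =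
      ∑ t ∈ Finset.range H,
        pexp (d t) (fun s =>
          pexp (π t s) (fun a => r s a + pexp (P s a) (f (t + 1)) - f t s)) := by
  set F : ℕ → ℝ := fun t => pexp (d t) (V t) - pexp (d t) (f t) with hF
  have key : ∀ t ∈ Finset.range H,
      pexp (d t) (fun s =>
        pexp (π t s) (fun a => r s a + pexp (P s a) (f (t + 1)) - f t s))
      = F t - F (t + 1) := by
    intro t ht
    rw [Finset.mem_range] at ht
    have step : ∀ g : S → ℝ,
        pexp (d t) (fun s => pexp (π t s) (fun a => pexp (P s a) g))
          = pexp (d (t + 1)) g := by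
      intro g
      rw [hd t, pexp_bind]
      exact congrArg (pexp (d t)) (funext fun s => (pexp_bind (π t s) (P s) g).symm)
    -- term_t
    have hterm : pexp (d t) (fun s =>
        pexp (π t s) (fun a => r s a + pexp (P s a) (f (t + 1)) - f t s))
        = pexp (d t) (fun s => pexp (π t s) (fun a => r s a))
          + pexp (d (t + 1)) (f (t + 1)) - pexp (d t) (f t) := by
      have : ∀ s, pexp (π t s) (fun a => r s a + pexp (P s a) (f (t + 1)) - f t s)
          = pexp (π t s) (fun a => r s a) + pexp (π t s) (fun a => pexp (P s a) (f (t + 1)))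
            - f t s := by
        intro s
        rw [show (fun a => r s a + pexp (P s a) (f (t + 1)) - f t s)
            = (fun a => (r s a + pexp (P s a) (f (t + 1))) - (fun _ : A => f t s) a) from rfl,
          pexp_sub, pexp_add, pexp_const]
      rw [show (fun s => pexp (π t s) (fun a => r s a + pexp (P s a) (f (t + 1)) - f t s))
          = (fun s => (pexp (π t s) (fun a => r s a)
              + pexp (π t s) (fun a => pexp (P s a) (f (t + 1)))) - f t s) from
          funext fun s => by rw [this s],
        pexp_sub, pexp_add, step]
    have hVt : pexp (d t) (V t)
        = pexp (d t) (fun s => pexp (π t s) (fun a => r s a))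
          + pexp (d (t + 1)) (V (t + 1)) := by
      have : (fun s => V t s)
          = fun s => pexp (π t s) (fun a => r s a)
            + pexp (π t s) (fun a => pexp (P s a) (V (t + 1))) := by
        funext s
        rw [hV t ht s, pexp_add]
      calc pexp (d t) (V t) = pexp (d t) (fun s => V t s) := rfl
        _ = pexp (d t) (fun s => pexp (π t s) (fun a => r s a)
              + pexp (π t s) (fun a => pexp (P s a) (V (t + 1)))) := by rw [this]
        _ = _ := by rw [pexp_add, step]
    rw [hterm, hF]
    simp only
    rw [hVt]
    ring
  rw [Finset.sum_congr rfl key, Finset.sum_range_sub' F H]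
  have hF0 : F 0 = V 0 s₀ - f 0 s₀ := by
    simp [hF, hd0, pexp_pure]
  have hFH : F H = 0 := by
    have h1 : pexp (d H) (V H) = 0 := by
      rw [show V H = fun _ => (0:ℝ) from funext hVH, pexp_const]
    have h2 : pexp (d H) (f H) = 0 := by
      rw [show f H = fun _ => (0:ℝ) from funext hfH, pexp_const]
    simp [hF, h1, h2]
  rw [hF0, hFH, sub_zero]
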